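/- arXiv:1604.04618 — 5 statements merged into one kernel-verified Lean document; each statement's English description precedes it below -/
import Mathlib

section
/- Let f : {±1}^n → ℝ. Sample p uniformly from [−1,1] and then x ∈ {±1}^n with independent coordinates each of expectation p. Then E[f(x) · Σ_{i=1}^n (x_i − p) + (f(x) − x̄)²] ≥ 1/3, where x̄ = (1/n)Σ_i x_i. -/
open Finset

noncomputable section

private def chi (b : Bool) : ℝ := if b then 1 else -1

private lemma chi_sq (b : Bool) : chi b ^ 2 = 1 := by cases b <;> simp [chi]

private def mu (n : ℕ) (p : ℝ) (x : Fin n → Bool) : ℝ := ∏ i, (1 + chi (x i) * p) / 2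

private lemma mu_cont (n : ℕ) (x : Fin n → Bool) : Continuous fun p => mu n p x := by
  unfold mu
  exact continuous_finset_prod _ fun i _ => by fun_prop

private lemma mu_nonneg {n : ℕ} {p : ℝ} (hp : p ∈ Set.Icc (-1:ℝ) 1) (x : Fin n → Bool) :
    0 ≤ mu n p x := by
  apply Finset.prod_nonneg
  intro i _
  obtain ⟨h1, h2⟩ := hp
  cases x i <;> simp [chi] <;> linarith

private lemma sum_mu (n : ℕ) (p : ℝ) : ∑ x : Fin n → Bool, mu n p x = 1 := by
  unfold mu
  rw [show (univ : Finset (Fin n → Bool)) = Fintype.piFinset (fun _ => univ) from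
    (Fintype.piFinset_univ).symm,
    Finset.sum_prod_piFinset univ (fun (_ : Fin n) (b : Bool) => (1 + chi b * p) / 2)]
  have h1 : ((1 + chi true * p) / 2 + (1 + chi false * p) / 2) = 1 := by
    simp [chi]; ring
  simp [Fintype.sum_bool, h1]

private lemma sum_mu_chi (n : ℕ) (p : ℝ) (i₀ : Fin n) :
    ∑ x : Fin n → Bool, mu n p x * chi (x i₀) = p := by
  have hx : ∀ x : Fin n → Bool, mu n p x * chi (x i₀) =
      ∏ i, ((1 + chi (x i) * p) / 2 * (if i = i₀ then chi (x i) else 1)) := by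
    intro x
    rw [Finset.prod_mul_distrib, Finset.prod_ite_eq' univ i₀ (fun i => chi (x i))]
    simp [mu]
  simp only [hx]
  rw [show (univ : Finset (Fin n → Bool)) = Fintype.piFinset (fun _ => univ) from
    (Fintype.piFinset_univ).symm,
    Finset.sum_prod_piFinset univ (fun (i : Fin n) (b : Bool) => (1 + chi b * p) / 2 * (if i = i₀ then chi b else 1))]
  have : ∀ i : Fin n, (∑ b : Bool, (1 + chi b * p) / 2 * (if i = i₀ then chi b else 1))
      = if i = i₀ then p else 1 := by
    intro i
    by_cases h : i = i₀ <;> simp [h, chi] <;> ring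
  simp only [this, Finset.prod_ite_eq' univ i₀ (fun _ => p), mem_univ, if_true]

private lemma hasDeriv_key (n : ℕ) (x : Fin n → Bool) (p : ℝ) :
    HasDerivAt (fun q => (1 - q ^ 2) * mu n q x)
      (mu n p x * (∑ i, (chi (x i) - p)) - 2 * p * mu n p x) p := by
  have hμ : HasDerivAt (fun q => mu n q x)
      (∑ i, (∏ j ∈ univ.erase i, (1 + chi (x j) * p) / 2) • (chi (x i) / 2)) p := by
    apply HasDerivAt.fun_finsetProd
    intro i _
    have : HasDerivAt (fun q : ℝ => (1 + chi (x i) * q) / 2) (chi (x i) / 2) p := by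
      simpa using (((hasDerivAt_id p).const_mul (chi (x i))).const_add 1).div_const 2
    exact this
  have h1 : HasDerivAt (fun q : ℝ => 1 - q ^ 2) (-(2 * p)) p := by
    simpa using ((hasDerivAt_pow 2 p).const_sub 1)
  have h := h1.mul hμ
  convert h using 1
  · rfl
  · rfl
  · rfl
  have key : (1 - p ^ 2) * (∑ i, (∏ j ∈ univ.erase i, (1 + chi (x j) * p) / 2) • (chi (x i) / 2))
      = mu n p x * (∑ i, (chi (x i) - p)) := by
    rw [Finset.mul_sum, Finset.mul_sum]
    refine Finset.sum_congr rfl fun i _ => ?_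
    simp only [smul_eq_mul, mu]
    rw [← Finset.mul_prod_erase _ _ (mem_univ i)]
    have h := chi_sq (x i)
    set c := chi (x i)
    set A := ∏ j ∈ univ.erase i, (1 + chi (x j) * p) / 2
    linear_combination (-(A * p) / 2) * h
  rw [← key]; ring

private lemma integral_D_zero (n : ℕ) (x : Fin n → Bool) :
    ∫ p in (-1:ℝ)..1, (mu n p x * (∑ i, (chi (x i) - p)) - 2 * p * mu n p x) = 0 := by
  have hcont : Continuous fun p =>
      mu n p x * (∑ i, (chi (x i) - p)) - 2 * p * mu n p x := by
    have h1 := mu_cont n x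
    fun_prop
  rw [intervalIntegral.integral_eq_sub_of_hasDerivAt
    (fun p _ => hasDeriv_key n x p) (hcont.intervalIntegrable _ _)]
  norm_num

/-- Proposition: correlation/error tradeoff with empirical mean:
For `f : {±1}^n → ℝ`, sampling `p` uniform in `[-1,1]` and `x ~ p^n`,
`E[f(x)·∑_i (x_i - p) + (f(x) - x̄)²] ≥ 1/3`, where `x̄ = (1/n)∑_i x_i`. -/
theorem stmt2 (n : ℕ) (hn : 0 < n) (f : (Fin n → Bool) → ℝ) :
    (1 / 3 : ℝ) ≤ (1 / 2) * ∫ p in (-1 : ℝ)..1,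
      ∑ x : Fin n → Bool,
        (∏ i, (1 + (if x i then (1 : ℝ) else -1) * p) / 2) *
          (f x * (∑ i, ((if x i then (1 : ℝ) else -1) - p)) +
            (f x - (∑ i, (if x i then (1 : ℝ) else -1)) / n) ^ 2) := by
  have hn' : (n : ℝ) ≠ 0 := Nat.cast_ne_zero.mpr hn.ne'
  set S : (Fin n → Bool) → ℝ := fun x => ∑ i, chi (x i) with hS
  set J : ℝ → ℝ := fun p => ∑ x : Fin n → Bool,
    mu n p x * (2 * p * f x + (f x - S x / n) ^ 2) with hJ
  set D : (Fin n → Bool) → ℝ → ℝ := fun x p =>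
    mu n p x * (∑ i, (chi (x i) - p)) - 2 * p * mu n p x with hD
  -- continuity facts
  have hJc : Continuous J := by
    apply continuous_finset_sum
    intro x _
    have := mu_cont n x
    fun_prop
  have hDc : ∀ x, Continuous (D x) := by
    intro x
    have := mu_cont n x
    fun_prop
  -- Step 1: rewrite integrand
  have step1 : (∫ p in (-1:ℝ)..1,
      ∑ x : Fin n → Bool,
        (∏ i, (1 + (if x i then (1 : ℝ) else -1) * p) / 2) *
          (f x * (∑ i, ((if x i then (1 : ℝ) else -1) - p)) +
            (f x - (∑ i, (if x i then (1 : ℝ) else -1)) / n) ^ 2))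
      = ∫ p in (-1:ℝ)..1, J p := by
    have heq : ∀ p : ℝ, (∑ x : Fin n → Bool,
        (∏ i, (1 + (if x i then (1 : ℝ) else -1) * p) / 2) *
          (f x * (∑ i, ((if x i then (1 : ℝ) else -1) - p)) +
            (f x - (∑ i, (if x i then (1 : ℝ) else -1)) / n) ^ 2))
        = J p + ∑ x : Fin n → Bool, f x * D x p := by
      intro p
      rw [hJ, ← Finset.sum_add_distrib]
      refine Finset.sum_congr rfl fun x _ => ?_
      show mu n p x * (f x * (∑ i, (chi (x i) - p)) + (f x - S x / n) ^ 2) = _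
      rw [hD, hS]
      ring
    rw [intervalIntegral.integral_congr (fun p _ => heq p),
      intervalIntegral.integral_add (hJc.intervalIntegrable _ _)
        (by exact (continuous_finset_sum _ fun x _ =>
          (continuous_const.mul (hDc x))).intervalIntegrable _ _),
      intervalIntegral.integral_finset_sum (f := fun x p => f x * D x p)
        (fun x _ => (continuous_const.mul (hDc x)).intervalIntegrable _ _)]
    have : ∀ x : Fin n → Bool, (∫ p in (-1:ℝ)..1, f x * D x p) = 0 := by
      intro x
      rw [intervalIntegral.integral_const_mul, integral_D_zero n x]
      ring
    simp [this]
  -- Step 2: pointwise lower bound for J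
  have step2 : ∀ p ∈ Set.Icc (-1:ℝ) 1, p ^ 2 ≤ J p := by
    intro p hp
    have hsum1 := sum_mu n p
    have hsumS : ∑ x : Fin n → Bool, mu n p x * S x = n * p := by
      have : ∀ x : Fin n → Bool, mu n p x * S x = ∑ i, mu n p x * chi (x i) := by
        intro x; rw [hS, Finset.mul_sum]
      simp only [this]
      rw [Finset.sum_comm]
      simp [sum_mu_chi n p]
    have base : ∑ x : Fin n → Bool, mu n p x * (2 * p * (S x / n) - p ^ 2) = p ^ 2 := by
      have expand : ∑ x : Fin n → Bool, mu n p x * (2 * p * (S x / n) - p ^ 2)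
          = (2 * p / n) * (∑ x : Fin n → Bool, mu n p x * S x)
            - p ^ 2 * (∑ x : Fin n → Bool, mu n p x) := by
        rw [Finset.mul_sum, Finset.mul_sum, ← Finset.sum_sub_distrib]
        refine Finset.sum_congr rfl fun x _ => ?_
        field_simp
      rw [expand, hsumS, hsum1]
      field_simp
      ring
    calc p ^ 2 = ∑ x : Fin n → Bool, mu n p x * (2 * p * (S x / n) - p ^ 2) := base.symm
      _ ≤ J p := by
          apply Finset.sum_le_sum
          intro x _
          apply mul_le_mul_of_nonneg_left _ (mu_nonneg hp x)
          nlinarith [sq_nonneg (f x - S x / n + p)]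
  -- Step 3: conclude
  have hpint : IntervalIntegrable (fun p : ℝ => p ^ 2) MeasureTheory.volume (-1) 1 :=
    (continuous_pow 2).intervalIntegrable _ _
  have hmono : (∫ p in (-1:ℝ)..1, p ^ 2) ≤ ∫ p in (-1:ℝ)..1, J p :=
    intervalIntegral.integral_mono_on (by norm_num) hpint
      (hJc.intervalIntegrable _ _) step2
  have hval : (∫ p in (-1:ℝ)..1, p ^ 2) = 2 / 3 := by
    rw [integral_pow]; norm_num
  rw [step1]
  nlinarith [hmono, hval]

end
end

section
/- Let f : {±1}^n → ℝ. Sample p uniformly from [−1,1] and x ∈ {±1}^n with independent coordinates each of expectation p. Then E[f(x) · Σ_{i=1}^n (x_i − p) + (f(x) − p)²] ≥ 1/3. -/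
open Finset

private lemma hasDeriv_aux (n : ℕ) (ε : Fin n → ℝ) (hε : ∀ i, ε i ^ 2 = 1) (p : ℝ) :
    HasDerivAt (fun p : ℝ => (1 - p ^ 2) * ∏ i, (1 + ε i * p) / 2)
      ((∏ i, (1 + ε i * p) / 2) * ((∑ i, (ε i - p)) - 2 * p)) p := by
  have h1 : HasDerivAt (fun p : ℝ => (1 : ℝ) - p ^ 2) (-(2 * p)) p := by
    simpa using ((hasDerivAt_pow 2 p).const_sub 1)
  have h2 : HasDerivAt (fun p : ℝ => ∏ i, (1 + ε i * p) / 2)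
      (∑ i, (∏ j ∈ univ.erase i, (1 + ε j * p) / 2) * (ε i / 2)) p := by
    have h := HasDerivAt.fun_finsetProd (u := univ) (f := fun i p => (1 + ε i * p) / 2)
      (f' := fun i => ε i / 2) (x := p) (fun i _ => by
        simpa using (((hasDerivAt_id p).const_mul (ε i)).const_add 1).div_const 2)
    simpa [smul_eq_mul] using h
  have h := h1.fun_mul h2
  have key : ∀ i : Fin n,
      (1 - p ^ 2) * ((∏ j ∈ univ.erase i, (1 + ε j * p) / 2) * (ε i / 2))
        = (ε i - p) * ∏ j, (1 + ε j * p) / 2 := by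
    intro i
    rw [← Finset.mul_prod_erase univ _ (mem_univ i)]
    linear_combination (-(∏ j ∈ univ.erase i, (1 + ε j * p) / 2) * p / 2) * hε i
  refine h.congr_deriv (Eq.symm ?_)
  rw [Finset.mul_sum]
  simp only [key]
  rw [← Finset.sum_mul]
  ring

private lemma int_zero (n : ℕ) (ε : Fin n → ℝ) (hε : ∀ i, ε i ^ 2 = 1) :
    ∫ p in (-1:ℝ)..1, (∏ i, (1 + ε i * p) / 2) * ((∑ i, (ε i - p)) - 2 * p) = 0 := by
  have h := intervalIntegral.integral_eq_sub_of_hasDerivAt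
    (f := fun p : ℝ => (1 - p ^ 2) * ∏ i, (1 + ε i * p) / 2)
    (a := -1) (b := 1) (fun p _ => hasDeriv_aux n ε hε p) ?_
  · rw [h]; norm_num
  · apply Continuous.intervalIntegrable
    fun_prop

/-- Proposition: correlation/error tradeoff with the bias `p`:
For `f : {±1}^n → ℝ`, sampling `p` uniform in `[-1,1]` and `x ~ p^n`,
`E[f(x)·∑_i (x_i - p) + (f(x) - p)²] ≥ 1/3`. -/
theorem stmt3 (n : ℕ) (f : (Fin n → Bool) → ℝ) :
    (1 / 3 : ℝ) ≤ (1 / 2) * ∫ p in (-1 : ℝ)..1,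
      ∑ x : Fin n → Bool,
        (∏ i, (1 + (if x i then (1 : ℝ) else -1) * p) / 2) *
          (f x * (∑ i, ((if x i then (1 : ℝ) else -1) - p)) + (f x - p) ^ 2) := by
  classical
  set ε : (Fin n → Bool) → Fin n → ℝ := fun x i => if x i then 1 else -1 with hεdef
  have hε : ∀ x i, ε x i ^ 2 = 1 := by
    intro x i; by_cases h : x i <;> simp [ε, h]
  have hrw : ∀ (x : Fin n → Bool) (i : Fin n), (if x i then (1:ℝ) else -1) = ε x i :=
    fun x i => rfl
  simp only [hrw]
  -- integrability facts
  have hwcont : ∀ x, Continuous (fun p : ℝ => ∏ i, (1 + ε x i * p) / 2) := by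
    intro x; fun_prop
  have hint : ∀ x, IntervalIntegrable
      (fun p : ℝ => (∏ i, (1 + ε x i * p) / 2) *
        (f x * (∑ i, (ε x i - p)) + (f x - p) ^ 2)) MeasureTheory.volume (-1) 1 := by
    intro x; apply Continuous.intervalIntegrable; fun_prop
  rw [intervalIntegral.integral_finset_sum (fun x _ => hint x)]
  have key : ∀ x : Fin n → Bool,
      (∫ p in (-1:ℝ)..1, (∏ i, (1 + ε x i * p) / 2) *
        (f x * (∑ i, (ε x i - p)) + (f x - p) ^ 2))
      = f x ^ 2 * (∫ p in (-1:ℝ)..1, ∏ i, (1 + ε x i * p) / 2)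
        + ∫ p in (-1:ℝ)..1, p ^ 2 * ∏ i, (1 + ε x i * p) / 2 := by
    intro x
    have hpt : ∀ p : ℝ, (∏ i, (1 + ε x i * p) / 2) *
        (f x * (∑ i, (ε x i - p)) + (f x - p) ^ 2)
        = f x * ((∏ i, (1 + ε x i * p) / 2) * ((∑ i, (ε x i - p)) - 2 * p))
          + (f x ^ 2 * ∏ i, (1 + ε x i * p) / 2
          + p ^ 2 * ∏ i, (1 + ε x i * p) / 2) := by
      intro p; ring
    simp only [hpt]
    rw [intervalIntegral.integral_add (by apply Continuous.intervalIntegrable; fun_prop)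
      (by apply Continuous.intervalIntegrable; fun_prop),
      intervalIntegral.integral_add (by apply Continuous.intervalIntegrable; fun_prop)
      (by apply Continuous.intervalIntegrable; fun_prop),
      intervalIntegral.integral_const_mul, int_zero n (ε x) (hε x),
      intervalIntegral.integral_const_mul]
    ring
  simp only [key]
  rw [Finset.sum_add_distrib]
  have hsum1 : ∀ p : ℝ, ∑ x : Fin n → Bool, ∏ i, (1 + ε x i * p) / 2 = 1 := by
    intro p
    have h := Fintype.prod_sum (ι := Fin n) (κ := fun _ => Bool)
      (fun _ b => (1 + (if b then (1:ℝ) else -1) * p) / 2)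
    calc (∑ x : Fin n → Bool, ∏ i, (1 + ε x i * p) / 2)
        = ∏ _i : Fin n, ∑ b : Bool, (1 + (if b then (1:ℝ) else -1) * p) / 2 := h.symm
      _ = 1 := by
          simp
          rw [show (1 + p) / 2 + (1 + -p) / 2 = (1:ℝ) by ring, one_pow]
  have hC : (∑ x : Fin n → Bool, ∫ p in (-1:ℝ)..1, p ^ 2 * ∏ i, (1 + ε x i * p) / 2)
      = 2 / 3 := by
    rw [← intervalIntegral.integral_finset_sum (fun x _ => by
      apply Continuous.intervalIntegrable; fun_prop)]
    have : ∀ p : ℝ, (∑ x : Fin n → Bool, p ^ 2 * ∏ i, (1 + ε x i * p) / 2) = p ^ 2 := by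
      intro p; rw [← Finset.mul_sum, hsum1 p, mul_one]
    simp only [this]
    rw [integral_pow]; norm_num
  rw [hC]
  have hA : ∀ x : Fin n → Bool, 0 ≤ f x ^ 2 * ∫ p in (-1:ℝ)..1, ∏ i, (1 + ε x i * p) / 2 := by
    intro x
    apply mul_nonneg (sq_nonneg _)
    apply intervalIntegral.integral_nonneg (by norm_num)
    intro p hp
    apply Finset.prod_nonneg
    intro i _
    by_cases h : x i <;> simp [ε, h] <;> [linarith [hp.1]; linarith [hp.2]]
  have hS : 0 ≤ ∑ x : Fin n → Bool,
      f x ^ 2 * ∫ p in (-1:ℝ)..1, ∏ i, (1 + ε x i * p) / 2 :=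
    Finset.sum_nonneg fun x _ => hA x
  linarith
end

section
/- Fix 0 ≤ a, b ≤ 1 and vectors x, y¹, …, y^k ∈ {±1}^n with ⟨y^j, x⟩ ≥ a·n for all j and |⟨y^j, y^{j'}⟩| ≤ b·n for all j ≠ j'. Let x̃ = sign(Σ_{j=1}^k y^j) ∈ {±1}^n (coordinate-wise sign, with any fixed tie-breaking). Then ⟨x̃, x⟩ ≥ (1 − 2/(a²k) − 2(b − a²)/a²) · n. -/
open Finset

/-- Reconstruction Lemma: For `0 < a ≤ 1`, `0 ≤ b ≤ 1`, and
vectors `x, y¹, …, y^k ∈ {±1}^n` with `⟨y^j, x⟩ ≥ a·n` for all `j` and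
`|⟨y^j, y^{j'}⟩| ≤ b·n` for `j ≠ j'`, the coordinate-wise sign
`x̃ = sign(∑_j y^j)` satisfies `⟨x̃, x⟩ ≥ (1 - 2/(a²k) - 2(b - a²)/a²)·n`. -/
theorem stmt5 (n k : ℕ) (hk : 0 < k) (a b : ℝ)
    (ha0 : 0 < a) (ha1 : a ≤ 1) (hb0 : 0 ≤ b) (hb1 : b ≤ 1)
    (x : Fin n → ℝ) (y : Fin k → Fin n → ℝ)
    (hx : ∀ i, x i = 1 ∨ x i = -1)
    (hy : ∀ j i, y j i = 1 ∨ y j i = -1)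
    (hcorr : ∀ j, a * n ≤ ∑ i, y j i * x i)
    (horth : ∀ j j', j ≠ j' → |∑ i, y j i * y j' i| ≤ b * n) :
    (1 - 2 / (a ^ 2 * k) - 2 * (b - a ^ 2) / a ^ 2) * n
      ≤ ∑ i, (if 0 ≤ ∑ j, y j i then (1 : ℝ) else -1) * x i := by
  classical
  set S : Fin n → ℝ := fun i => ∑ j, y j i with hS
  set t : Fin n → ℝ := fun i => (if 0 ≤ S i then (1:ℝ) else -1) * x i with ht
  have hkR : (0:ℝ) < k := by exact_mod_cast hk
  have hnR : (0:ℝ) ≤ n := Nat.cast_nonneg n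
  have hak : (0:ℝ) < a * k := mul_pos ha0 hkR
  have htval : ∀ i, t i = 1 ∨ t i = -1 := by
    intro i
    rcases hx i with h | h <;> by_cases h0 : 0 ≤ S i <;> simp [ht, h, h0]
  set bad := Finset.univ.filter (fun i => t i = -1) with hbad
  -- bad coordinates have S i * x i ≤ 0
  have hbadle : ∀ i ∈ bad, S i * x i ≤ 0 := by
    intro i hi
    have hti : t i = -1 := (Finset.mem_filter.mp hi).2
    by_cases h0 : 0 ≤ S i
    · have hxi : x i = -1 := by
        rcases hx i with h | h
        · exfalso; rw [ht] at hti; simp [h0, h] at hti; norm_num at hti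
        · exact h
      rw [hxi]; nlinarith
    · have hxi : x i = 1 := by
        rcases hx i with h | h
        · exact h
        · exfalso; rw [ht] at hti; simp [h0, h] at hti; norm_num at hti
      rw [hxi]; nlinarith [lt_of_not_ge h0]
  -- sum of t equals n - 2 * card bad
  have hcard : ∑ i, t i = (n : ℝ) - 2 * bad.card := by
    have h1 : ∀ i, (1:ℝ) - t i = if t i = -1 then 2 else 0 := by
      intro i
      rcases htval i with h | h <;> norm_num [h]
    have h2 : ∑ i, ((1:ℝ) - t i) = 2 * bad.card := by
      rw [Finset.sum_congr rfl (fun i _ => h1 i), Finset.sum_ite, Finset.sum_const,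
        Finset.sum_const]
      simp [hbad, mul_comm]
    have h3 : ∑ i, ((1:ℝ) - t i) = (n : ℝ) - ∑ i, t i := by
      rw [Finset.sum_sub_distrib, Finset.sum_const]
      simp
    rw [h3] at h2
    linarith
  -- first moment
  have hsum1 : a * k * n ≤ ∑ i, S i * x i := by
    have e : ∑ i, S i * x i = ∑ j, ∑ i, y j i * x i := by
      rw [Finset.sum_comm]
      exact Finset.sum_congr rfl fun i _ => by rw [hS, Finset.sum_mul]
    rw [e]
    calc a * k * n = ∑ _j : Fin k, a * n := by
          rw [Finset.sum_const]; simp; ring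
      _ ≤ ∑ j, ∑ i, y j i * x i := Finset.sum_le_sum fun j _ => hcorr j
  -- second moment
  have hsum2 : ∑ i, (S i)^2 ≤ k * n + k * k * (b * n) := by
    have e : ∑ i, (S i)^2 = ∑ j, ∑ j', ∑ i, y j i * y j' i := by
      have e1 : ∀ i, (S i)^2 = ∑ j, ∑ j', y j i * y j' i := by
        intro i
        rw [sq, hS, Finset.sum_mul_sum]
      rw [Finset.sum_congr rfl fun i _ => e1 i, Finset.sum_comm]
      exact Finset.sum_congr rfl fun j _ => Finset.sum_comm
    rw [e]
    have hpair : ∀ j j', ∑ i, y j i * y j' i ≤ b * n + (if j = j' then (n:ℝ) else 0) := by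
      intro j j'
      by_cases h : j = j'
      · subst h
        have hd : ∑ i, y j i * y j i = (n : ℝ) := by
          have : ∀ i, y j i * y j i = 1 := fun i => by rcases hy j i with h|h <;> simp [h]
          simp [this]
        rw [hd]
        simp
        positivity
      · have h1 := (le_abs_self _).trans (horth j j' h)
        simp [h]
        linarith
    calc ∑ j, ∑ j', ∑ i, y j i * y j' i
        ≤ ∑ j, ∑ j', (b * n + (if j = j' then (n:ℝ) else 0)) :=
          Finset.sum_le_sum fun j _ => Finset.sum_le_sum fun j' _ => hpair j j'
      _ = k * k * (b * n) + k * n := by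
          simp [Finset.sum_add_distrib, Finset.sum_ite_eq, Finset.sum_const]
          ring
      _ ≤ k * n + k * k * (b * n) := by linarith
  -- key: card bad * (ak)^2 bounded
  have hkey : (bad.card : ℝ) * (a*k)^2 ≤ ∑ i, (a*k - S i * x i)^2 := by
    calc (bad.card : ℝ) * (a*k)^2 = ∑ _i ∈ bad, (a*k)^2 := by
          rw [Finset.sum_const]; simp [mul_comm]
      _ ≤ ∑ i ∈ bad, (a*k - S i * x i)^2 := by
          apply Finset.sum_le_sum
          intro i hi
          have := hbadle i hi
          nlinarith
      _ ≤ ∑ i, (a*k - S i * x i)^2 :=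
          Finset.sum_le_sum_of_subset_of_nonneg (Finset.subset_univ _)
            (fun i _ _ => sq_nonneg _)
  have hexp : ∑ i, (a*k - S i * x i)^2
      = (a*k)^2 * n - 2*(a*k) * (∑ i, S i * x i) + ∑ i, (S i)^2 := by
    have e1 : ∀ i, (a*k - S i * x i)^2
        = (a*k)^2 - 2*(a*k) * (S i * x i) + (S i * x i)^2 := fun i => by ring
    have e2 : ∀ i, (S i * x i)^2 = (S i)^2 := by
      intro i
      rcases hx i with h | h <;> rw [h] <;> ring
    rw [Finset.sum_congr rfl fun i _ => e1 i]
    rw [Finset.sum_add_distrib, Finset.sum_sub_distrib, Finset.sum_const, ← Finset.mul_sum,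
      Finset.sum_congr rfl fun i _ => e2 i]
    simp [mul_comm]
  -- combine into bound on card bad
  have hB : (bad.card : ℝ) * (a*k)^2 ≤ (k:ℝ) * n + k * k * (b * n) - (a*k)^2 * n := by
    have h1 : -2*(a*k) * (∑ i, S i * x i) ≤ -2*(a*k) * (a * k * n) := by
      have := mul_le_mul_of_nonneg_left hsum1 (by positivity : (0:ℝ) ≤ 2*(a*k))
      nlinarith
    nlinarith [hkey, hexp, hsum2]
  -- finish
  have hgoal : (1 - 2 / (a ^ 2 * k) - 2 * (b - a ^ 2) / a ^ 2) * n ≤ ∑ i, t i := by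
    rw [hcard]
    have ha2k : (0:ℝ) < a^2 * k := by positivity
    refine le_of_mul_le_mul_right ?_ ha2k
    have e1 : 2 / (a ^ 2 * k) * (a ^ 2 * k) = 2 := by field_simp
    have e3 : (1 - 2 / (a ^ 2 * k) - 2 * (b - a ^ 2) / a ^ 2) * n * (a ^ 2 * k)
        = a^2 * k * n - 2 * n - 2 * (b - a^2) * k * n := by
      field_simp
    rw [e3]
    nlinarith [hB, hnR, hkR, sq_nonneg a, (Nat.cast_nonneg bad.card : (0:ℝ) ≤ (bad.card:ℝ))]
  exact hgoal
end

section
/- Let ν be a Laplace random variable with scale λ > 0, and let [a,b] ⊆ [a',b'] be intervals with η ≥ (b'−a') − (b−a) ≥ 0. Then P[ν ∈ [a',b']] ≤ (e^{η/λ} / (1 − e^{−(b−a)/(2λ)})) · P[ν ∈ [a,b]]. -/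
set_option maxHeartbeats 1000000

-- handles the case 2 < 2*A + B
lemma core2 (A B Ap Bp q : ℝ) (h1 : 0 < Ap) (h2 : Ap ≤ A) (h3 : A < 1)
    (h4 : 0 < Bp) (h5 : Bp ≤ B) (h6 : B < 1) (h7 : 0 < q) (h8 : q*q = A*B)
    (hc : 2 < 2*A + B) :
    Ap*Bp*(2-Ap-Bp)*(1-q) ≤ q*q*(2-A-B) := by
  have hA0 : 0 < A := lt_of_lt_of_le h1 h2
  have hB0 : 0 < B := lt_of_lt_of_le h4 h5
  have hq1 : q < 1 := by nlinarith
  have key : 1 - q*q ≤ 2 - A - B := by nlinarith [mul_nonneg (sub_nonneg.2 h3.le) (sub_nonneg.2 h6.le)]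
  have t1 : Ap*Bp*(2-Ap-Bp) ≤ Bp*(2-Bp)*(2-Bp)/4 := by
    nlinarith [mul_nonneg h4.le (sq_nonneg (2 - Bp - 2*Ap))]
  have hq2 : B*(2-B)/2 ≤ q*q := by
    nlinarith [mul_nonneg hB0.le (by linarith : (0:ℝ) ≤ 2*A + B - 2)]
  rcases le_or_gt B (2/3) with hB | hB
  · have t2 : Bp*(2-Bp)*(2-Bp) ≤ B*(2-B)*(2-B) := by
      have hP : 0 ≤ 4 - 4*(B+Bp) + (B^2 + B*Bp + Bp^2) := by
        nlinarith [sq_nonneg (2 - B - Bp), mul_nonneg h4.le (le_trans h4.le h5)]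
      nlinarith [mul_nonneg (sub_nonneg.2 h5) hP]
    have u2 : B*(2-B)*(2-B)/4 ≤ q*q*(2-B)/2 := by nlinarith [hq2, (by linarith : (0:ℝ) ≤ 2 - B)]
    have u3 : q*q*(2-B)/2 ≤ q*q*(1+q) := by nlinarith [mul_pos h7 h7]
    have hX : Ap*Bp*(2-Ap-Bp) ≤ q*q*(1+q) := by linarith
    have v1 : Ap*Bp*(2-Ap-Bp)*(1-q) ≤ q*q*(1+q)*(1-q) :=
      mul_le_mul_of_nonneg_right hX (by linarith)
    have v2 : q*q*(1+q)*(1-q) ≤ q*q*(2-A-B) := by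
      have h := mul_nonneg (mul_pos h7 h7).le (show (0:ℝ) ≤ (2-A-B) - (1-q*q) by linarith)
      linarith [h]
    linarith
  · have hq3 : 1/3 < q*q := by nlinarith
    have t3 : Bp*(2-Bp)*(2-Bp)/4 ≤ 8/27 := by
      nlinarith [mul_nonneg (sq_nonneg (3*Bp - 2)) (by linarith : (0:ℝ) ≤ 8 - 3*Bp)]
    have hqh : 1/2 < q := by nlinarith [hq3, h7]
    have w : (8:ℝ)/27 ≤ q*q*(1+q) := by nlinarith [hq3, hqh, mul_pos h7 h7]
    have hX : Ap*Bp*(2-Ap-Bp) ≤ q*q*(1+q) := by linarith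
    have v1 : Ap*Bp*(2-Ap-Bp)*(1-q) ≤ q*q*(1+q)*(1-q) :=
      mul_le_mul_of_nonneg_right hX (by linarith)
    have v2 : q*q*(1+q)*(1-q) ≤ q*q*(2-A-B) := by
      have h := mul_nonneg (mul_pos h7 h7).le (show (0:ℝ) ≤ (2-A-B) - (1-q*q) by linarith)
      linarith [h]
    linarith

lemma core (A B Ap Bp q : ℝ) (h1 : 0 < Ap) (h2 : Ap ≤ A) (h3 : A < 1)
    (h4 : 0 < Bp) (h5 : Bp ≤ B) (h6 : B < 1) (h7 : 0 < q) (h8 : q*q = A*B) :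
    Ap*Bp*(2-Ap-Bp)*(1-q) ≤ q*q*(2-A-B) := by
  have hA0 : 0 < A := lt_of_lt_of_le h1 h2
  have hB0 : 0 < B := lt_of_lt_of_le h4 h5
  have hq1 : q < 1 := by nlinarith
  rcases lt_or_ge 2 (2*A + B) with hc | hc
  · exact core2 A B Ap Bp q h1 h2 h3 h4 h5 h6 h7 h8 hc
  rcases lt_or_ge 2 (A + 2*B) with hd | hd
  · have h := core2 B A Bp Ap q h4 h5 h6 h1 h2 h3 h7 (by rw [h8]; ring) (by linarith)
    linarith [h]
  · -- corner case: monotone to (A,B)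
    have s1 : Ap*Bp*(2-Ap-Bp) ≤ A*Bp*(2-A-Bp) := by
      nlinarith [mul_nonneg (mul_nonneg h4.le (sub_nonneg.2 h2))
        (show (0:ℝ) ≤ 2 - Bp - A - Ap by linarith)]
    have s2 : A*Bp*(2-A-Bp) ≤ A*B*(2-A-B) := by
      nlinarith [mul_nonneg (mul_nonneg hA0.le (sub_nonneg.2 h5))
        (show (0:ℝ) ≤ 2 - A - B - Bp by linarith)]
    have hX : Ap*Bp*(2-Ap-Bp) ≤ q*q*(2-A-B) := by rw [h8]; linarith
    have hXpos : 0 ≤ q*q*(2-A-B) :=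
      mul_nonneg (mul_nonneg h7.le h7.le) (by linarith)
    nlinarith [mul_le_mul_of_nonneg_right hX (show (0:ℝ) ≤ 1 - q by linarith),
      mul_nonneg hXpos h7.le]

lemma lap_cont (lam : ℝ) : Continuous (fun t : ℝ => (1 / (2 * lam)) * Real.exp (-|t| / lam)) := by
  fun_prop

lemma intg_pos (lam : ℝ) (hlam : 0 < lam) (c d : ℝ) :
    ∫ t in c..d, (1 / (2 * lam)) * Real.exp (-t / lam)
      = (1/2) * Real.exp (-c/lam) - (1/2) * Real.exp (-d/lam) := by
  have h : ∀ t ∈ Set.uIcc c d,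
      HasDerivAt (fun u : ℝ => -(1/2) * Real.exp (-u/lam))
        ((1 / (2 * lam)) * Real.exp (-t / lam)) t := by
    intro t _
    have h1 : HasDerivAt (fun u : ℝ => -u/lam) (-1/lam) t := by
      simpa using ((hasDerivAt_id t).neg.div_const lam)
    have h3 := (h1.exp).const_mul (-(1/2) : ℝ)
    convert h3 using 1
    · rfl
    · rfl
    · ring
  rw [intervalIntegral.integral_eq_sub_of_hasDerivAt h
    ((Continuous.intervalIntegrable (by fun_prop) c d))]
  ring

lemma intg_neg (lam : ℝ) (hlam : 0 < lam) (c d : ℝ) :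
    ∫ t in c..d, (1 / (2 * lam)) * Real.exp (t / lam)
      = (1/2) * Real.exp (d/lam) - (1/2) * Real.exp (c/lam) := by
  have h : ∀ t ∈ Set.uIcc c d,
      HasDerivAt (fun u : ℝ => (1/2) * Real.exp (u/lam))
        ((1 / (2 * lam)) * Real.exp (t / lam)) t := by
    intro t _
    have h1 : HasDerivAt (fun u : ℝ => u/lam) (1/lam) t := by
      simpa using ((hasDerivAt_id t).div_const lam)
    have h3 := (h1.exp).const_mul ((1/2) : ℝ)
    convert h3 using 1
    · rfl
    · rfl
    · ring
  rw [intervalIntegral.integral_eq_sub_of_hasDerivAt h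
    ((Continuous.intervalIntegrable (by fun_prop) c d))]

lemma int_abs_pos (lam : ℝ) (hlam : 0 < lam) (c d : ℝ) (hc : 0 ≤ c) (hcd : c ≤ d) :
    ∫ t in c..d, (1 / (2 * lam)) * Real.exp (-|t| / lam)
      = (1/2) * Real.exp (-c/lam) - (1/2) * Real.exp (-d/lam) := by
  rw [← intg_pos lam hlam c d]
  apply intervalIntegral.integral_congr
  intro t ht
  rw [Set.uIcc_of_le hcd] at ht
  simp only
  rw [abs_of_nonneg (le_trans hc ht.1)]

lemma int_abs_neg (lam : ℝ) (hlam : 0 < lam) (c d : ℝ) (hd : d ≤ 0) (hcd : c ≤ d) :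
    ∫ t in c..d, (1 / (2 * lam)) * Real.exp (-|t| / lam)
      = (1/2) * Real.exp (d/lam) - (1/2) * Real.exp (c/lam) := by
  rw [← intg_neg lam hlam c d]
  apply intervalIntegral.integral_congr
  intro t ht
  rw [Set.uIcc_of_le hcd] at ht
  simp only
  rw [abs_of_nonpos (le_trans ht.2 hd), neg_neg]

/-- Laplace interval comparison: Let `ν ~ Lap(λ)` with `λ > 0`,
and intervals `[a,b] ⊆ [a',b']` with `η ≥ (b'-a') - (b-a)`. Then
`P[ν ∈ [a',b']] ≤ (e^{η/λ}/(1 - e^{-(b-a)/(2λ)})) · P[ν ∈ [a,b]]`,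
with probabilities written via the Laplace density `(1/(2λ))e^{-|t|/λ}`. -/
theorem stmt9 (lam a b a' b' η : ℝ) (hlam : 0 < lam) (hab : a < b)
    (ha : a' ≤ a) (hb : b ≤ b') (hη : (b' - a') - (b - a) ≤ η) :
    (∫ t in a'..b', (1 / (2 * lam)) * Real.exp (-|t| / lam))
      ≤ (Real.exp (η / lam) / (1 - Real.exp (-(b - a) / (2 * lam)))) *
          ∫ t in a..b, (1 / (2 * lam)) * Real.exp (-|t| / lam) := by
  have hl : lam ≠ 0 := ne_of_gt hlam
  have hq0 : 0 < Real.exp (-(b - a) / (2 * lam)) := Real.exp_pos _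
  have hq1 : Real.exp (-(b - a) / (2 * lam)) < 1 := by
    exact Real.exp_lt_one_iff.mpr (div_neg_of_neg_of_pos (by linarith) (by linarith))
  have h1q : 0 < 1 - Real.exp (-(b - a) / (2 * lam)) := by linarith
  have hE1 : 1 ≤ Real.exp (η / lam) := Real.one_le_exp (div_nonneg (by linarith) hlam.le)
  have hqsq : Real.exp (-(b - a) / (2 * lam)) * Real.exp (-(b - a) / (2 * lam))
      = Real.exp (-(b - a) / lam) := by
    rw [← Real.exp_add]; congr 1; field_simp; ring
  set q := Real.exp (-(b - a) / (2 * lam)) with hqdef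
  set E := Real.exp (η / lam) with hEdef
  rcases le_or_gt 0 a with hpos | hneg
  · -- case 0 ≤ a
    rw [int_abs_pos lam hlam a b hpos hab.le]
    have hmono : (∫ t in a'..b', (1 / (2 * lam)) * Real.exp (-|t| / lam))
        ≤ ∫ t in a'..b', (1 / (2 * lam)) * Real.exp (-t / lam) := by
      apply intervalIntegral.integral_mono_on (by linarith)
        ((lap_cont lam).intervalIntegrable _ _)
        (Continuous.intervalIntegrable (by fun_prop) _ _)
      intro t _
      have h1 : -|t| / lam ≤ -t / lam :=
        (div_le_div_iff_of_pos_right hlam).mpr (neg_le_neg (le_abs_self t))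
      exact mul_le_mul_of_nonneg_left (Real.exp_le_exp.mpr h1) (by positivity)
    rw [intg_pos lam hlam a' b'] at hmono
    have e1 : Real.exp (-b/lam) = Real.exp (-a/lam) * (q*q) := by
      rw [hqsq, ← Real.exp_add]; congr 1; field_simp; ring
    have e2 : Real.exp (-a'/lam) ≤ E * Real.exp (-a/lam) := by
      rw [hEdef, ← Real.exp_add]
      apply Real.exp_le_exp.mpr
      rw [← add_div]
      exact (div_le_div_iff_of_pos_right hlam).mpr (by linarith)
    rw [div_mul_eq_mul_div, le_div_iff₀ h1q]
    have hxpos : 0 < Real.exp (-a/lam) := Real.exp_pos _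
    have hx'pos : 0 < Real.exp (-b'/lam) := Real.exp_pos _
    have step1 : (∫ t in a'..b', (1 / (2 * lam)) * Real.exp (-|t| / lam))
        ≤ (1/2) * (E * Real.exp (-a/lam)) := by nlinarith [hmono, e2]
    have step2 : (1/2) * (E * Real.exp (-a/lam)) * (1-q)
        ≤ E * ((1/2) * Real.exp (-a/lam) - (1/2) * Real.exp (-b/lam)) := by
      rw [e1]
      have : 0 ≤ E * Real.exp (-a/lam) * (q * (1 - q)) := by positivity
      nlinarith [this]
    calc (∫ t in a'..b', (1 / (2 * lam)) * Real.exp (-|t| / lam)) * (1-q)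
        ≤ (1/2) * (E * Real.exp (-a/lam)) * (1-q) :=
          mul_le_mul_of_nonneg_right step1 (by linarith)
      _ ≤ _ := step2
  · rcases le_or_gt b 0 with hbneg | hbpos
    · -- case b ≤ 0
      rw [int_abs_neg lam hlam a b hbneg hab.le]
      have hmono : (∫ t in a'..b', (1 / (2 * lam)) * Real.exp (-|t| / lam))
          ≤ ∫ t in a'..b', (1 / (2 * lam)) * Real.exp (t / lam) := by
        apply intervalIntegral.integral_mono_on (by linarith)
          ((lap_cont lam).intervalIntegrable _ _)
          (Continuous.intervalIntegrable (by fun_prop) _ _)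
        intro t _
        have h1 : -|t| / lam ≤ t / lam :=
          (div_le_div_iff_of_pos_right hlam).mpr (by linarith [neg_abs_le t])
        exact mul_le_mul_of_nonneg_left (Real.exp_le_exp.mpr h1) (by positivity)
      rw [intg_neg lam hlam a' b'] at hmono
      have e1 : Real.exp (a/lam) = Real.exp (b/lam) * (q*q) := by
        rw [hqsq, ← Real.exp_add]; congr 1; field_simp; try ring
      have e2 : Real.exp (b'/lam) ≤ E * Real.exp (b/lam) := by
        rw [hEdef, ← Real.exp_add]
        apply Real.exp_le_exp.mpr
        rw [← add_div]
        exact (div_le_div_iff_of_pos_right hlam).mpr (by linarith)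
      rw [div_mul_eq_mul_div, le_div_iff₀ h1q]
      have hxpos : 0 < Real.exp (b/lam) := Real.exp_pos _
      have hx'pos : 0 < Real.exp (a'/lam) := Real.exp_pos _
      have step1 : (∫ t in a'..b', (1 / (2 * lam)) * Real.exp (-|t| / lam))
          ≤ (1/2) * (E * Real.exp (b/lam)) := by nlinarith [hmono, e2]
      have step2 : (1/2) * (E * Real.exp (b/lam)) * (1-q)
          ≤ E * ((1/2) * Real.exp (b/lam) - (1/2) * Real.exp (a/lam)) := by
        rw [e1]
        have : 0 ≤ E * Real.exp (b/lam) * (q * (1 - q)) := by positivity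
        nlinarith [this]
      calc (∫ t in a'..b', (1 / (2 * lam)) * Real.exp (-|t| / lam)) * (1-q)
          ≤ (1/2) * (E * Real.exp (b/lam)) * (1-q) :=
            mul_le_mul_of_nonneg_right step1 (by linarith)
        _ ≤ _ := step2
    · -- case a < 0 < b
      have ha'0 : a' < 0 := lt_of_le_of_lt ha hneg
      have hb'0 : 0 < b' := lt_of_lt_of_le hbpos hb
      have hsplit : (∫ t in a'..b', (1 / (2 * lam)) * Real.exp (-|t| / lam))
          = (∫ t in a'..(0:ℝ), (1 / (2 * lam)) * Real.exp (-|t| / lam))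
            + ∫ t in (0:ℝ)..b', (1 / (2 * lam)) * Real.exp (-|t| / lam) :=
        (intervalIntegral.integral_add_adjacent_intervals
          ((lap_cont lam).intervalIntegrable a' 0)
          ((lap_cont lam).intervalIntegrable 0 b')).symm
      have hsplit2 : (∫ t in a..b, (1 / (2 * lam)) * Real.exp (-|t| / lam))
          = (∫ t in a..(0:ℝ), (1 / (2 * lam)) * Real.exp (-|t| / lam))
            + ∫ t in (0:ℝ)..b, (1 / (2 * lam)) * Real.exp (-|t| / lam) :=
        (intervalIntegral.integral_add_adjacent_intervals
          ((lap_cont lam).intervalIntegrable a 0)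
          ((lap_cont lam).intervalIntegrable 0 b)).symm
      rw [hsplit, hsplit2,
        int_abs_neg lam hlam a' 0 le_rfl ha'0.le,
        int_abs_neg lam hlam a 0 le_rfl hneg.le,
        int_abs_pos lam hlam 0 b' le_rfl hb'0.le,
        int_abs_pos lam hlam 0 b le_rfl hbpos.le]
      simp only [zero_div, neg_zero, Real.exp_zero]
      have hApos : 0 < Real.exp (a/lam) := Real.exp_pos _
      have hBpos : 0 < Real.exp (-b/lam) := Real.exp_pos _
      have hA'pos : 0 < Real.exp (a'/lam) := Real.exp_pos _
      have hB'pos : 0 < Real.exp (-b'/lam) := Real.exp_pos _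
      have hA1 : Real.exp (a/lam) < 1 :=
        Real.exp_lt_one_iff.mpr (div_neg_of_neg_of_pos hneg hlam)
      have hB1 : Real.exp (-b/lam) < 1 :=
        Real.exp_lt_one_iff.mpr (div_neg_of_neg_of_pos (by linarith) hlam)
      have hAp : Real.exp (a'/lam) ≤ Real.exp (a/lam) :=
        Real.exp_le_exp.mpr ((div_le_div_iff_of_pos_right hlam).mpr ha)
      have hBp : Real.exp (-b'/lam) ≤ Real.exp (-b/lam) :=
        Real.exp_le_exp.mpr ((div_le_div_iff_of_pos_right hlam).mpr (by linarith))
      have hq2 : q * q = Real.exp (a/lam) * Real.exp (-b/lam) := by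
        rw [hqsq, ← Real.exp_add]; congr 1; field_simp; ring
      have hEq : q * q ≤ E * (Real.exp (a'/lam) * Real.exp (-b'/lam)) := by
        rw [hqsq, hEdef, ← Real.exp_add, ← Real.exp_add]
        apply Real.exp_le_exp.mpr
        have heq : η/lam + (a'/lam + -b'/lam) = (η + a' - b')/lam := by ring
        rw [heq]
        exact (div_le_div_iff_of_pos_right hlam).mpr (by linarith)
      have hcore := core (Real.exp (a/lam)) (Real.exp (-b/lam))
        (Real.exp (a'/lam)) (Real.exp (-b'/lam)) q
        hA'pos hAp hA1 hB'pos hBp hB1 hq0 hq2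
      rw [div_mul_eq_mul_div E (1 - q), le_div_iff₀ h1q]
      have hXpos : 0 < Real.exp (a'/lam) * Real.exp (-b'/lam) := by positivity
      have hABnn : (0:ℝ) ≤ 2 - Real.exp (a/lam) - Real.exp (-b/lam) := by linarith
      have hmul : q*q*(2 - Real.exp (a/lam) - Real.exp (-b/lam))
          ≤ E * (Real.exp (a'/lam) * Real.exp (-b'/lam))
            * (2 - Real.exp (a/lam) - Real.exp (-b/lam)) :=
        mul_le_mul_of_nonneg_right hEq hABnn
      have hchain : (Real.exp (a'/lam) * Real.exp (-b'/lam))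
            * ((2 - Real.exp (a'/lam) - Real.exp (-b'/lam)) * (1-q))
          ≤ (Real.exp (a'/lam) * Real.exp (-b'/lam))
            * (E * (2 - Real.exp (a/lam) - Real.exp (-b/lam))) := by
        nlinarith [hcore, hmul]
      have hfin : (2 - Real.exp (a'/lam) - Real.exp (-b'/lam)) * (1-q)
          ≤ E * (2 - Real.exp (a/lam) - Real.exp (-b/lam)) :=
        le_of_mul_le_mul_left hchain hXpos
      nlinarith [hfin]
end

section
/- Let M : [T]^n → [T] be an ε-differentially private algorithm that, on any input, outputs an α-approximate median with probability at least 1 − β, where 0 < α < 1/2, 0 < β < 1/2. Then n ≥ Ω((log T + log(1/β))/(αε)); concretely, ε(2αn + 2) ≥ log((1−β)(T−1)/β). -/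
open MeasureTheory Finset ENNReal

private lemma card_filter_le_aux (n a b : ℕ) (p : Fin n → Prop) [DecidablePred p]
    (h : ∀ i, p i → a ≤ i.val ∧ i.val < b) :
    (univ.filter p).card ≤ b - a := by
  calc (univ.filter p).card ≤ (Finset.Ico a b).card := by
        refine Finset.card_le_card_of_injOn Fin.val (fun i hi => ?_) ?_
        · simp only [Finset.mem_coe, mem_filter, mem_univ, true_and] at hi
          simpa [Finset.mem_Ico] using h i hi
        · exact fun i _ j _ hij => Fin.val_injective hij
    _ = b - a := Nat.card_Ico a b

private lemma group_privacy {T n : ℕ} (ε : ℝ) (M : (Fin n → Fin T) → Measure (Fin T))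
    (hdp : ∀ x x' : Fin n → Fin T, (∃ i, ∀ j, j ≠ i → x j = x' j) →
      ∀ R : Set (Fin T), M x R ≤ ENNReal.ofReal (Real.exp ε) * M x' R) :
    ∀ (s : Finset (Fin n)) (x x' : Fin n → Fin T), (∀ j ∉ s, x j = x' j) →
      ∀ R : Set (Fin T), M x R ≤ (ENNReal.ofReal (Real.exp ε)) ^ s.card * M x' R := by
  intro s
  induction s using Finset.induction_on with
  | empty =>
    intro x x' h R
    have : x = x' := funext fun j => h j (by simp)
    simp [this]
  | @insert a s ha ih =>
    intro x x' h R
    have h1 : M x R ≤ ENNReal.ofReal (Real.exp ε) * M (Function.update x a (x' a)) R := by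
      refine hdp _ _ ⟨a, fun j hj => ?_⟩ R
      rw [Function.update_of_ne hj]
    have h2 : M (Function.update x a (x' a)) R ≤
        (ENNReal.ofReal (Real.exp ε)) ^ s.card * M x' R := by
      refine ih _ _ (fun j hj => ?_) R
      by_cases hja : j = a
      · subst hja; simp
      · rw [Function.update_of_ne hja]
        exact h j (by simp [hja, hj])
    calc M x R ≤ ENNReal.ofReal (Real.exp ε) * M (Function.update x a (x' a)) R := h1
      _ ≤ ENNReal.ofReal (Real.exp ε) * ((ENNReal.ofReal (Real.exp ε)) ^ s.card * M x' R) :=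
          mul_le_mul_right h2 _
      _ = (ENNReal.ofReal (Real.exp ε)) ^ (insert a s).card * M x' R := by
          rw [Finset.card_insert_of_notMem ha, pow_succ]; ring

/-- packing lower bound for private approximate medians:
If `M : [T]^n → [T]` is ε-differentially private and outputs an α-approximate
median with probability at least `1 - β` on every input, then
`ε(2αn + 2) ≥ log((1-β)(T-1)/β)` (so `n ≥ Ω((log T + log(1/β))/(αε))`). -/
theorem stmt10 (T n : ℕ) (hT : 2 ≤ T) (hn : 1 ≤ n) (α β ε : ℝ)
    (hα0 : 0 < α) (hα : α < 1 / 2) (hβ0 : 0 < β) (hβ : β < 1 / 2) (hε : 0 < ε)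
    (M : (Fin n → Fin T) → Measure (Fin T))
    (hprob : ∀ x, IsProbabilityMeasure (M x))
    (hdp : ∀ x x' : Fin n → Fin T, (∃ i, ∀ j, j ≠ i → x j = x' j) →
      ∀ R : Set (Fin T), M x R ≤ ENNReal.ofReal (Real.exp ε) * M x' R)
    (hacc : ∀ x : Fin n → Fin T,
      ENNReal.ofReal (1 - β) ≤ M x {y : Fin T |
        (1 / 2 - α) * n ≤ ((Finset.univ.filter (fun i => x i ≤ y)).card : ℝ) ∧
        (1 / 2 - α) * n ≤ ((Finset.univ.filter (fun i => y ≤ x i)).card : ℝ)}) :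
    Real.log ((1 - β) * ((T : ℝ) - 1) / β) ≤ ε * (2 * α * n + 2) := by
  set z : ℝ := (1 / 2 - α) * n with hzdef
  have hz0 : 0 < z := by
    apply _root_.mul_pos (by linarith)
    exact_mod_cast Nat.pos_of_ne_zero (by omega)
  set m : ℕ := ⌈z⌉₊ - 1 with hmdef
  have hceil : 1 ≤ ⌈z⌉₊ := Nat.ceil_pos.mpr hz0
  have hmcast : (m : ℝ) = (⌈z⌉₊ : ℝ) - 1 := by
    rw [hmdef]; push_cast [hceil]; ring
  have hmz : (m : ℝ) < z := by
    have := Nat.ceil_lt_add_one hz0.le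
    rw [hmcast]; linarith
  have hzm : z ≤ (m : ℝ) + 1 := by
    have := Nat.le_ceil z
    rw [hmcast]; linarith
  have hαn : 0 < α * n := by
    apply mul_pos hα0
    exact_mod_cast Nat.pos_of_ne_zero (by omega)
  have h2m : 2 * m < n := by
    have : (2 * m : ℝ) < (n : ℝ) := by
      nlinarith [hmz]
    exact_mod_cast this
  -- the hard-coded datasets
  have hT0 : 0 < T := by omega
  set z0 : Fin T := ⟨0, hT0⟩ with hz0def
  set lastT : Fin T := ⟨T - 1, by omega⟩ with hlastdef
  set x : Fin T → Fin n → Fin T := fun t i =>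
    if i.val < m then z0 else if i.val < 2 * m then lastT else t with hxdef
  have hxlo : ∀ (t : Fin T) (i : Fin n), i.val < m → x t i = z0 := by
    intro t i h; simp only [hxdef]; rw [if_pos h]
  have hxmid : ∀ (t : Fin T) (i : Fin n), m ≤ i.val → i.val < 2 * m → x t i = lastT := by
    intro t i h1 h2; simp only [hxdef]; rw [if_neg (by omega), if_pos h2]
  have hxhi : ∀ (t : Fin T) (i : Fin n), 2 * m ≤ i.val → x t i = t := by
    intro t i h; simp only [hxdef]; rw [if_neg (by omega), if_neg (by omega)]
  -- the only approximate median of x t is t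
  have hMt : ∀ t : Fin T, ENNReal.ofReal (1 - β) ≤ M (x t) {t} := by
    intro t
    refine le_trans (hacc (x t)) (measure_mono ?_)
    intro y hy
    simp only [Set.mem_setOf_eq] at hy
    obtain ⟨hy1, hy2⟩ := hy
    have : y = t := by
      by_contra hyt
      rcases lt_or_gt_of_ne hyt with hlt | hgt
      · -- y < t : few elements ≤ y
        have hcard : (univ.filter (fun i => x t i ≤ y)).card ≤ m - 0 := by
          apply card_filter_le_aux
          intro i hi
          refine ⟨Nat.zero_le _, ?_⟩
          by_contra hic
          push_neg at hic
          rcases lt_or_ge i.val (2 * m) with h2 | h2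
          · rw [hxmid t i hic h2] at hi
            have h3 : T - 1 ≤ y.val := hi
            have h4 : y.val < t.val := hlt
            have := t.isLt
            omega
          · rw [hxhi t i h2] at hi
            exact absurd hlt (not_lt.mpr hi)
        have : ((univ.filter (fun i => x t i ≤ y)).card : ℝ) ≤ (m : ℝ) := by
          exact_mod_cast le_trans hcard (by omega)
        linarith
      · -- t < y : few elements ≥ y
        have hcard : (univ.filter (fun i => y ≤ x t i)).card ≤ 2 * m - m := by
          apply card_filter_le_aux
          intro i hi
          constructor
          · by_contra hic
            push_neg at hic
            rw [hxlo t i hic] at hi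
            have h3 : y.val ≤ 0 := hi
            have h4 : t.val < y.val := hgt
            omega
          · by_contra hic
            push_neg at hic
            rw [hxhi t i hic] at hi
            exact absurd hgt (not_lt.mpr hi)
        have : ((univ.filter (fun i => y ≤ x t i)).card : ℝ) ≤ (m : ℝ) := by
          exact_mod_cast le_trans hcard (by omega)
        linarith
    exact this ▸ rfl
  -- group privacy between x t and x z0
  set E := ENNReal.ofReal (Real.exp ε) with hEdef
  have hE1 : (1 : ℝ≥0∞) ≤ E := ENNReal.one_le_ofReal.mpr (Real.one_le_exp hε.le)
  set c : ℕ := n - 2 * m with hcdef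
  have hgp : ∀ t : Fin T, ∀ R : Set (Fin T), M (x t) R ≤ E ^ c * M (x z0) R := by
    intro t R
    set s : Finset (Fin n) := univ.filter (fun i => 2 * m ≤ i.val) with hsdef
    have hagree : ∀ j ∉ s, x t j = x z0 j := by
      intro j hj
      simp only [hsdef, mem_filter, mem_univ, true_and, not_le] at hj
      rcases lt_or_ge j.val m with h | h
      · rw [hxlo t j h, hxlo z0 j h]
      · rw [hxmid t j h hj, hxmid z0 j h hj]
    have hscard : s.card ≤ c := by
      rw [hsdef, hcdef]
      exact card_filter_le_aux n (2 * m) n (fun i => 2 * m ≤ i.val)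
        (fun i hi => ⟨hi, i.isLt⟩)
    calc M (x t) R ≤ E ^ s.card * M (x z0) R := group_privacy ε M hdp s _ _ hagree R
      _ ≤ E ^ c * M (x z0) R := mul_le_mul_left (pow_le_pow_right₀ hE1 hscard) _
  -- complement bound
  have hcompl : M (x z0) ({z0}ᶜ : Set (Fin T)) ≤ ENNReal.ofReal β := by
    haveI := hprob (x z0)
    rw [prob_compl_eq_one_sub (measurableSet_singleton z0)]
    calc (1 : ℝ≥0∞) - M (x z0) {z0} ≤ 1 - ENNReal.ofReal (1 - β) :=
          tsub_le_tsub_left (hMt z0) 1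
      _ = ENNReal.ofReal β := by
          rw [← ENNReal.ofReal_one, ← ENNReal.ofReal_sub _ (by linarith : (0:ℝ) ≤ 1 - β)]
          norm_num
  -- packing
  have hsum : ((T - 1 : ℕ) : ℝ≥0∞) * ENNReal.ofReal (1 - β) ≤ E ^ c * ENNReal.ofReal β := by
    calc ((T - 1 : ℕ) : ℝ≥0∞) * ENNReal.ofReal (1 - β)
        = ∑ _t ∈ univ \ {z0}, ENNReal.ofReal (1 - β) := by
          rw [Finset.sum_const, Finset.card_sdiff_of_subset (by simp), card_univ, Fintype.card_fin,
            Finset.card_singleton, nsmul_eq_mul]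
      _ ≤ ∑ t ∈ univ \ {z0}, E ^ c * M (x z0) {t} :=
          Finset.sum_le_sum (fun t _ => le_trans (hMt t) (hgp t {t}))
      _ = E ^ c * ∑ t ∈ univ \ {z0}, M (x z0) {t} := by rw [Finset.mul_sum]
      _ ≤ E ^ c * M (x z0) ({z0}ᶜ : Set (Fin T)) := by
          apply mul_le_mul_right
          rw [← measure_biUnion_finset ?_ (fun t _ => measurableSet_singleton t)]
          · apply measure_mono
            intro y hy
            simp only [Set.mem_iUnion, Set.mem_singleton_iff] at hy
            obtain ⟨t, ht, rfl⟩ := hy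
            simp only [Finset.mem_sdiff, Finset.mem_singleton] at ht
            exact ht.2
          · intro a ha b hb hab
            simp [Function.onFun, Set.disjoint_singleton, hab]
      _ ≤ E ^ c * ENNReal.ofReal β := mul_le_mul_right hcompl _
  -- back to the reals
  have hreal : ((T - 1 : ℕ) : ℝ) * (1 - β) ≤ Real.exp (c * ε) * β := by
    have h1 : ENNReal.ofReal (((T - 1 : ℕ) : ℝ) * (1 - β)) ≤
        ENNReal.ofReal (Real.exp (c * ε) * β) := by
      calc ENNReal.ofReal (((T - 1 : ℕ) : ℝ) * (1 - β))
          = ((T - 1 : ℕ) : ℝ≥0∞) * ENNReal.ofReal (1 - β) := by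
            rw [ENNReal.ofReal_mul (by positivity), ENNReal.ofReal_natCast]
        _ ≤ E ^ c * ENNReal.ofReal β := hsum
        _ = ENNReal.ofReal (Real.exp (c * ε) * β) := by
            rw [hEdef, ← ENNReal.ofReal_pow (Real.exp_nonneg ε), ← Real.exp_nat_mul,
              ENNReal.ofReal_mul (Real.exp_nonneg _)]
    exact (ENNReal.ofReal_le_ofReal_iff (by positivity)).mp h1
  have hTcast : ((T - 1 : ℕ) : ℝ) = (T : ℝ) - 1 := by
    have : (1 : ℕ) ≤ T := by omega
    push_cast [this]; ring
  have hccast : (c : ℝ) = (n : ℝ) - 2 * m := by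
    rw [hcdef]; push_cast [le_of_lt h2m]; ring
  have hc2 : (c : ℝ) ≤ 2 * α * n + 2 := by
    rw [hccast]; nlinarith [hzm]
  have hT1 : (1 : ℝ) ≤ (T : ℝ) - 1 := by
    have : (2 : ℝ) ≤ (T : ℝ) := by exact_mod_cast hT
    linarith
  have hx : 0 < (1 - β) * ((T : ℝ) - 1) / β :=
    div_pos (mul_pos (by linarith) (by linarith)) hβ0
  have hlog : Real.log ((1 - β) * ((T : ℝ) - 1) / β) ≤ (c : ℝ) * ε := by
    rw [Real.log_le_iff_le_exp hx]
    rw [div_le_iff₀ hβ0]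
    rw [hTcast] at hreal
    linarith [hreal]
  calc Real.log ((1 - β) * ((T : ℝ) - 1) / β) ≤ (c : ℝ) * ε := hlog
    _ ≤ ε * (2 * α * n + 2) := by
        have := mul_le_mul_of_nonneg_left hc2 hε.le
        linarith
end
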